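/- With the setup of the alternative matrix M' above, every item i ∉ S has score τ'_i = τ_i + (1/(n−1−2h))·Σ_{m∈S}(τ_m − τ_{k+1+2h}) under M'. In particular all scores of items outside S are increased by a common constant. -/

import Mathlib

noncomputable def score (n : ℕ) (M : Fin n → Fin n → ℝ) (i : Fin n) : ℝ :=
  (1 / ((n : ℝ) - 1)) * ∑ j ∈ Finset.univ.erase i, M i j

theorem stmt10 (n k h : ℕ) (hn : 2 ≤ n) (hkh : 2 * h + 1 ≤ k) (hkn : k + 2 * h < n)
    (M M' : Fin n → Fin n → ℝ)
    (hrange : ∀ i j : Fin n, i ≠ j → M i j ∈ Set.Ioo (0:ℝ) 1)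
    (hskew : ∀ i j : Fin n, i ≠ j → M i j = 1 - M j i)
    (hdec : ∀ i j : Fin n, i < j → score n M j < score n M i)
    (S : Finset (Fin n)) (hS : S.card = 2 * h + 1) (hStop : ∀ m ∈ S, (m : ℕ) < k)
    (hM' : ∀ i j : Fin n, M' i j =
      if i ∈ S ∧ j ∉ S then
        M i j - ((n : ℝ) - 1) / ((n : ℝ) - 1 - 2 * h) *
          (score n M i - score n M ⟨k + 2 * h, hkn⟩)
      else if j ∈ S ∧ i ∉ S then
        M i j + ((n : ℝ) - 1) / ((n : ℝ) - 1 - 2 * h) *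
          (score n M j - score n M ⟨k + 2 * h, hkn⟩)
      else M i j) :
    ∀ i : Fin n, i ∉ S →
      score n M' i = score n M i + (1 / ((n : ℝ) - 1 - 2 * h)) *
        ∑ m ∈ S, (score n M m - score n M ⟨k + 2 * h, hkn⟩) := by
  intro i hi
  have hn1 : (n : ℝ) - 1 ≠ 0 := by
    have : (2 : ℝ) ≤ n := by exact_mod_cast hn
    linarith
  have hD : (n : ℝ) - 1 - 2 * h ≠ 0 := by
    have hn' : 4 * h + 2 ≤ n := by omega
    have : (4 * (h : ℝ) + 2) ≤ n := by exact_mod_cast hn'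
    linarith
  have hsum : ∑ j ∈ Finset.univ.erase i, M' i j
      = ∑ j ∈ Finset.univ.erase i, (M i j + if j ∈ S then
          ((n : ℝ) - 1) / ((n : ℝ) - 1 - 2 * h) *
          (score n M j - score n M ⟨k + 2 * h, hkn⟩) else 0) := by
    refine Finset.sum_congr rfl fun j hj => ?_
    rw [hM']
    by_cases hjS : j ∈ S
    · simp [hi, hjS]
    · simp [hi, hjS]
  have hfilter : (Finset.univ.erase i).filter (· ∈ S) = S := by
    ext j
    simp only [Finset.mem_filter, Finset.mem_erase, Finset.mem_univ, and_true, true_and]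
    constructor
    · exact fun hj => hj.2
    · intro hj; exact ⟨fun hji => hi (hji ▸ hj), hj⟩
  simp only [score] at *
  rw [hsum, Finset.sum_add_distrib, Finset.sum_ite, Finset.sum_const_zero, add_zero,
    hfilter, ← Finset.mul_sum]
  field_simp
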